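/- Let n ≥ 1 and m ≥ 1. Every set of pairwise noncrossing m-allowable diagonals of the convex ((n+1)m+2)-gon that is maximal with respect to inclusion has exactly n elements (i.e., the complex Δ(m,n) is pure of dimension n−1). -/
import Mathlib


/-- `x` lies strictly inside the open arc from `a` counterclockwise to `b`
in the convex `N`-gon whose vertices are identified with `ZMod N`. -/
def ArcBtw {N : ℕ} (a b x : ZMod N) : Prop :=
  ∃ k : ℕ, 0 < k ∧ k < (b - a).val ∧ x = a + (k : ZMod N)

/-- `p` is a diagonal of the convex `N`-gon: an unordered pair `{a, b}` of
vertices with `b ∉ {a, a+1, a-1}`. -/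
def IsDiagonal {N : ℕ} (p : Sym2 (ZMod N)) : Prop :=
  ∃ a b : ZMod N, p = s(a, b) ∧ b ≠ a ∧ b ≠ a + 1 ∧ b ≠ a - 1

/-- The diagonals `p` and `q` cross: their endpoints interleave in cyclic
order, i.e. exactly one endpoint of one of them lies strictly inside one of
the two open arcs determined by the other. -/
def Crosses {N : ℕ} (p q : Sym2 (ZMod N)) : Prop :=
  ∃ a b c d : ZMod N, p = s(a, b) ∧ q = s(c, d) ∧ ArcBtw a b c ∧ ArcBtw b a d

/-- The diagonal `p = {a, b}` is `m`-allowable: the number of vertices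
strictly between `a` and `b` on each of the two arcs determined by `{a, b}`
is divisible by `m`. -/
def MAllowable {N : ℕ} (m : ℕ) (p : Sym2 (ZMod N)) : Prop :=
  ∃ a b : ZMod N, p = s(a, b) ∧ m ∣ ((b - a).val - 1) ∧ m ∣ ((a - b).val - 1)

/-- A face of the complex `Δ(m, n)` (with `N = (n+1)m+2`): a set of pairwise
noncrossing `m`-allowable diagonals of the convex `N`-gon. -/
def IsFace {N : ℕ} (m : ℕ) (F : Finset (Sym2 (ZMod N))) : Prop :=
  (∀ p ∈ F, IsDiagonal p ∧ MAllowable m p) ∧ ∀ p ∈ F, ∀ q ∈ F, ¬ Crosses p q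

set_option linter.unusedSectionVars false
set_option linter.unusedVariables false

variable {N : ℕ} [NeZero N]

def d2 (a b : ZMod N) : ℕ := (b - a).val
lemma d2_lt (a b : ZMod N) : d2 a b < N := ZMod.val_lt _

lemma d2_eq_zero_iff {a b : ZMod N} : d2 a b = 0 ↔ a = b := by
  rw [d2, ZMod.val_eq_zero, sub_eq_zero, eq_comm]

lemma cast_d2 (a b : ZMod N) : ((d2 a b : ℕ) : ZMod N) = b - a :=
  (ZMod.natCast_val _).trans (ZMod.cast_id _ _)

lemma d2_shift (a b t : ZMod N) : d2 (a + t) (b + t) = d2 a b := by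
  simp [d2]

lemma d2_add_d2 {a b : ZMod N} (h : a ≠ b) : d2 a b + d2 b a = N := by
  have h1 : (d2 a b : ZMod N) + (d2 b a : ZMod N) = 0 := by
    rw [cast_d2, cast_d2]; ring
  have h2 : ((d2 a b + d2 b a : ℕ) : ZMod N) = 0 := by push_cast; exact h1
  have h3 := (ZMod.natCast_eq_zero_iff _ _).mp h2
  have h4 : d2 a b < N := d2_lt a b
  have h5 : d2 b a < N := d2_lt b a
  have h6 : 0 < d2 a b := Nat.pos_of_ne_zero (fun hh => h (d2_eq_zero_iff.mp hh))
  rcases h3 with ⟨k, hk⟩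
  have hN : 0 < N := Nat.pos_of_ne_zero (NeZero.ne N)
  rcases Nat.lt_or_ge k 2 with hh | hh
  · interval_cases k <;> omega
  · exfalso; nlinarith

lemma d2_sub_left {a b c : ZMod N} (h : d2 a c ≤ d2 a b) : d2 c b = d2 a b - d2 a c := by
  have : b - c = ((d2 a b - d2 a c : ℕ) : ZMod N) := by
    push_cast [Nat.cast_sub h, cast_d2]; ring
  rw [d2, this, ZMod.val_cast_of_lt (by have := d2_lt a b; omega)]

lemma d2_wrap {a b c : ZMod N} (h : d2 a b < d2 a c) : d2 c b = N + d2 a b - d2 a c := by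
  have hc : d2 a c < N := d2_lt a c
  have : b - c = ((N + d2 a b - d2 a c : ℕ) : ZMod N) := by
    push_cast [Nat.cast_sub (by omega : d2 a c ≤ N + d2 a b), cast_d2]
    simp [ZMod.natCast_self]
  rw [d2, this, ZMod.val_cast_of_lt (by omega)]

lemma d2_add {a b c : ZMod N} (h : d2 a b + d2 b c < N) : d2 a c = d2 a b + d2 b c := by
  have : c - a = ((d2 a b + d2 b c : ℕ) : ZMod N) := by push_cast [cast_d2]; ring
  rw [d2, this, ZMod.val_cast_of_lt h]

lemma arcBtw_iff {a b x : ZMod N} : ArcBtw a b x ↔ 0 < d2 a x ∧ d2 a x < d2 a b := by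
  constructor
  · rintro ⟨k, hk0, hk, rfl⟩
    have hkN : k < N := lt_trans hk (d2_lt a b)
    have : d2 a (a + (k:ZMod N)) = k := by
      rw [d2, add_sub_cancel_left, ZMod.val_cast_of_lt hkN]
    rw [this]; exact ⟨hk0, hk⟩
  · rintro ⟨h0, h1⟩
    refine ⟨d2 a x, h0, h1, ?_⟩
    rw [cast_d2]; ring

lemma d2_pos_iff {a b : ZMod N} : 0 < d2 a b ↔ a ≠ b := by
  rw [Nat.pos_iff_ne_zero, ne_eq, d2_eq_zero_iff]

lemma d2_one_iff (hN : 2 < N) {a b : ZMod N} : d2 a b = 1 ↔ b = a + 1 := by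
  constructor
  · intro h
    have hc := cast_d2 a b
    rw [h] at hc
    push_cast at hc
    linear_combination -hc
  · intro h
    subst h
    rw [d2, add_sub_cancel_left, ZMod.val_one_eq_one_mod, Nat.mod_eq_of_lt (by omega)]

lemma isDiagonal_iff (hN : 2 < N) {a b : ZMod N} :
    IsDiagonal (s(a, b)) ↔ 2 ≤ d2 a b ∧ 2 ≤ d2 b a := by
  have key : ∀ x y : ZMod N, (y ≠ x ∧ y ≠ x + 1 ∧ y ≠ x - 1) ↔ (2 ≤ d2 x y ∧ 2 ≤ d2 y x) := by
    intro x y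
    constructor
    · rintro ⟨h1, h2, h3⟩
      have p1 : 0 < d2 x y := d2_pos_iff.mpr (Ne.symm h1)
      have p2 : 0 < d2 y x := d2_pos_iff.mpr h1
      have q1 : d2 x y ≠ 1 := fun hh => h2 ((d2_one_iff hN).mp hh)
      have q2 : d2 y x ≠ 1 := by
        intro hh
        have := (d2_one_iff hN).mp hh
        exact h3 (eq_sub_iff_add_eq.mpr this.symm)
      omega
    · rintro ⟨h1, h2⟩
      have p1 : y ≠ x := fun hh => by rw [hh] at h1; rw [d2_eq_zero_iff.mpr rfl] at h1; omega
      refine ⟨p1, fun hh => ?_, fun hh => ?_⟩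
      · rw [← d2_one_iff hN] at hh; omega
      · have : x = y + 1 := (eq_sub_iff_add_eq.mp hh).symm
        rw [← d2_one_iff hN] at this; omega
  constructor
  · rintro ⟨a', b', hp, h1, h2, h3⟩
    rcases Sym2.eq_iff.mp hp with ⟨rfl, rfl⟩ | ⟨rfl, rfl⟩
    · exact (key a b).mp ⟨h1, h2, h3⟩
    · have := (key b a).mp ⟨h1, h2, h3⟩
      exact ⟨this.2, this.1⟩
  · intro h
    exact ⟨a, b, rfl, (key a b).mpr h⟩

lemma mallowable_iff {m : ℕ} {a b : ZMod N} :
    MAllowable m (s(a, b)) ↔ m ∣ (d2 a b - 1) ∧ m ∣ (d2 b a - 1) := by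
  constructor
  · rintro ⟨a', b', hp, h1, h2⟩
    rcases Sym2.eq_iff.mp hp with ⟨rfl, rfl⟩ | ⟨rfl, rfl⟩
    · exact ⟨h1, h2⟩
    · exact ⟨h2, h1⟩
  · rintro ⟨h1, h2⟩
    exact ⟨a, b, rfl, h1, h2⟩

lemma crosses_iff {a b c d : ZMod N} :
    Crosses (s(a, b)) (s(c, d)) ↔
      (ArcBtw a b c ∧ ArcBtw b a d) ∨ (ArcBtw a b d ∧ ArcBtw b a c) := by
  constructor
  · rintro ⟨x, y, z, w, hp, hq, h1, h2⟩
    rcases Sym2.eq_iff.mp hp with ⟨rfl, rfl⟩ | ⟨rfl, rfl⟩ <;>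
      rcases Sym2.eq_iff.mp hq with ⟨rfl, rfl⟩ | ⟨rfl, rfl⟩
    · exact Or.inl ⟨h1, h2⟩
    · exact Or.inr ⟨h1, h2⟩
    · exact Or.inr ⟨h2, h1⟩
    · exact Or.inl ⟨h2, h1⟩
  · rintro (⟨h1, h2⟩ | ⟨h1, h2⟩)
    · exact ⟨a, b, c, d, rfl, rfl, h1, h2⟩
    · exact ⟨a, b, d, c, rfl, by rw [Sym2.eq_swap], h1, h2⟩

lemma arc_flip {x y z w : ZMod N} (hzy : ArcBtw x y z) (hwx : ArcBtw y x w) :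
    ArcBtw z w y ∧ ArcBtw w z x := by
  rw [arcBtw_iff] at hzy hwx ⊢
  rw [arcBtw_iff]
  obtain ⟨h1, h2⟩ := hzy
  obtain ⟨h3, h4⟩ := hwx
  have hxy : x ≠ y := by
    intro h; subst h; have := d2_eq_zero_iff.mpr (rfl : x = x); omega
  have hA := d2_add_d2 hxy
  have hxw : d2 x w = d2 x y + d2 y w := d2_add (by omega)
  have hzw : d2 z w = d2 x w - d2 x z := d2_sub_left (by omega)
  have hzy' : d2 z y = d2 x y - d2 x z := d2_sub_left (le_of_lt h2)
  have hne : z ≠ w := by rw [← d2_pos_iff]; omega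
  have hwz : d2 z w + d2 w z = N := d2_add_d2 hne
  have hne2 : x ≠ w := by rw [← d2_pos_iff]; omega
  have hwx' : d2 x w + d2 w x = N := d2_add_d2 hne2
  have hNN := d2_lt x w
  exact ⟨⟨by omega, by omega⟩, ⟨by omega, by omega⟩⟩

lemma crosses_comm {p q : Sym2 (ZMod N)} (h : Crosses p q) : Crosses q p := by
  obtain ⟨a, b, c, d, rfl, rfl, h1, h2⟩ := h
  obtain ⟨g1, g2⟩ := arc_flip h1 h2
  exact ⟨c, d, b, a, rfl, Sym2.eq_swap.symm, g1, g2⟩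

lemma not_crosses_self (p : Sym2 (ZMod N)) : ¬ Crosses p p := by
  intro h
  obtain ⟨a, b, c, d, hp, hq, h1, h2⟩ := h
  rw [hp] at hq
  rw [arcBtw_iff] at h1 h2
  rcases Sym2.eq_iff.mp hq with ⟨rfl, rfl⟩ | ⟨rfl, rfl⟩
  · have : d2 a a = 0 := d2_eq_zero_iff.mpr rfl
    omega
  · have : d2 b b = 0 := d2_eq_zero_iff.mpr rfl
    omega

/-! ### Translation invariance -/

def tr {N : ℕ} (t : ZMod N) : Sym2 (ZMod N) → Sym2 (ZMod N) := Sym2.map (· + t)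

lemma tr_tr {N : ℕ} (t : ZMod N) (p : Sym2 (ZMod N)) : tr (-t) (tr t p) = p := by
  induction p using Sym2.inductionOn with
  | hf x y => simp [tr]

lemma tr_inj {N : ℕ} (t : ZMod N) : Function.Injective (tr (N := N) t) := by
  intro p q h
  have := congrArg (tr (-t)) h
  rwa [tr_tr, tr_tr] at this

lemma arcBtw_shift {a b x t : ZMod N} : ArcBtw (a + t) (b + t) (x + t) ↔ ArcBtw a b x := by
  rw [arcBtw_iff, arcBtw_iff, d2_shift, d2_shift]

lemma isDiagonal_tr_of {t : ZMod N} {p : Sym2 (ZMod N)} (h : IsDiagonal p) :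
    IsDiagonal (tr t p) := by
  obtain ⟨a, b, rfl, h1, h2, h3⟩ := h
  refine ⟨a + t, b + t, rfl, ?_, ?_, ?_⟩
  · exact fun hh => h1 (by linear_combination hh)
  · exact fun hh => h2 (by linear_combination hh)
  · exact fun hh => h3 (by linear_combination hh)

lemma mallowable_tr_of {m : ℕ} {t : ZMod N} {p : Sym2 (ZMod N)} (h : MAllowable m p) :
    MAllowable m (tr t p) := by
  obtain ⟨a, b, rfl, h1, h2⟩ := h
  refine ⟨a + t, b + t, rfl, ?_, ?_⟩
  · rwa [show b + t - (a + t) = b - a by ring]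
  · rwa [show a + t - (b + t) = a - b by ring]

lemma crosses_tr_iff {t : ZMod N} {p q : Sym2 (ZMod N)} :
    Crosses (tr t p) (tr t q) ↔ Crosses p q := by
  induction p using Sym2.inductionOn with
  | hf a b =>
  induction q using Sym2.inductionOn with
  | hf c d =>
  show Crosses s(a+t, b+t) s(c+t, d+t) ↔ _
  rw [crosses_iff, crosses_iff, arcBtw_shift, arcBtw_shift, arcBtw_shift, arcBtw_shift]

lemma isFace_tr {m : ℕ} {t : ZMod N} {F : Finset (Sym2 (ZMod N))} (h : IsFace m F) :
    IsFace m (F.image (tr t)) := by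
  obtain ⟨h1, h2⟩ := h
  constructor
  · intro p hp
    obtain ⟨p', hp', rfl⟩ := Finset.mem_image.mp hp
    exact ⟨isDiagonal_tr_of (h1 p' hp').1, mallowable_tr_of (h1 p' hp').2⟩
  · intro p hp q hq
    obtain ⟨p', hp', rfl⟩ := Finset.mem_image.mp hp
    obtain ⟨q', hq', rfl⟩ := Finset.mem_image.mp hq
    rw [crosses_tr_iff]
    exact h2 p' hp' q' hq'

/-- Translation preserves maximality. -/
lemma max_tr {m : ℕ} {t : ZMod N} {F : Finset (Sym2 (ZMod N))}
    (hmax : ∀ G : Finset (Sym2 (ZMod N)), IsFace m G → F ⊆ G → F = G) :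
    ∀ G : Finset (Sym2 (ZMod N)), IsFace m G → F.image (tr t) ⊆ G → F.image (tr t) = G := by
  intro G hG hsub
  have hsub' : F ⊆ G.image (tr (-t)) := by
    intro p hp
    refine Finset.mem_image.mpr ⟨tr t p, hsub (Finset.mem_image_of_mem _ hp), tr_tr t p⟩
  have := hmax (G.image (tr (-t))) (isFace_tr hG) hsub'
  rw [this]
  ext q
  simp only [Finset.mem_image]
  constructor
  · rintro ⟨q', ⟨q'', hq'', rfl⟩, rfl⟩
    have : tr t (tr (-t) q'') = q'' := by
      have := tr_tr (-t) q''; rwa [neg_neg] at this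
    rwa [this]
  · intro hq
    exact ⟨tr (-t) q, ⟨q, hq, rfl⟩, by have := tr_tr (-t) q; rwa [neg_neg] at this⟩

lemma d2_val {x y : ZMod N} :
    d2 x y = if x.val ≤ y.val then y.val - x.val else N - x.val + y.val := by
  have hx : ((x.val : ℕ) : ZMod N) = x := (ZMod.natCast_val _).trans (ZMod.cast_id _ _)
  have hy : ((y.val : ℕ) : ZMod N) = y := (ZMod.natCast_val _).trans (ZMod.cast_id _ _)
  have hxN := ZMod.val_lt x
  have hyN := ZMod.val_lt y
  split_ifs with h
  · have : y - x = ((y.val - x.val : ℕ) : ZMod N) := by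
      rw [Nat.cast_sub h, hx, hy]
    rw [d2, this, ZMod.val_cast_of_lt (by omega)]
  · have : y - x = ((N - x.val + y.val : ℕ) : ZMod N) := by
      rw [Nat.cast_add, Nat.cast_sub (le_of_lt hxN), hx, hy, ZMod.natCast_self]
      ring
    rw [d2, this, ZMod.val_cast_of_lt (by omega)]

lemma d2_inj {a x y : ZMod N} (h : d2 a x = d2 a y) : x = y := by
  have h1 := cast_d2 a x
  have h2 := cast_d2 a y
  rw [h] at h1
  have := h1.symm.trans h2
  linear_combination this

lemma d2_zero_left {x : ZMod N} : d2 0 x = x.val := by rw [d2, sub_zero]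

lemma val_natCast_lt {k : ℕ} (h : k < N) : ((k : ZMod N)).val = k := ZMod.val_cast_of_lt h

/-- The ear lemma. -/
lemma ear_exists {m : ℕ} (hm : 1 ≤ m) (hsize : 2 * m + 2 ≤ N) (hmN : m ∣ N - m - 2)
    (F : Finset (Sym2 (ZMod N))) (hF : IsFace m F)
    (hmax : ∀ G : Finset (Sym2 (ZMod N)), IsFace m G → F ⊆ G → F = G) :
    ∃ a : ZMod N, s(a, a + ((m + 1 : ℕ) : ZMod N)) ∈ F ∧
      ∀ c e : ZMod N, s(c, e) ∈ F →
        ¬ ArcBtw a (a + ((m + 1 : ℕ) : ZMod N)) c := by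
  have hN : 2 < N := by omega
  have hm2 : m + 1 < N := by omega
  -- the candidate short diagonal based at a point a
  have short_diag : ∀ a : ZMod N, IsDiagonal s(a, a + ((m+1 : ℕ) : ZMod N)) ∧
      MAllowable m s(a, a + ((m+1 : ℕ) : ZMod N)) := by
    intro a
    have hd : d2 a (a + ((m+1 : ℕ) : ZMod N)) = m + 1 := by
      rw [d2, add_sub_cancel_left, val_natCast_lt hm2]
    have hne : a ≠ a + ((m+1 : ℕ) : ZMod N) := by
      rw [← d2_pos_iff, hd]; omega
    have hd2 : d2 (a + ((m+1 : ℕ) : ZMod N)) a = N - (m+1) := by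
      have := d2_add_d2 hne; omega
    constructor
    · rw [isDiagonal_iff hN, hd, hd2]
      constructor <;> omega
    · rw [mallowable_iff, hd, hd2]
      exact ⟨⟨1, by omega⟩, by rw [show N - (m+1) - 1 = N - m - 2 by omega]; exact hmN⟩
  -- F is nonempty
  have hFne : F.Nonempty := by
    by_contra hemp
    rw [Finset.not_nonempty_iff_eq_empty] at hemp
    have hface : IsFace m {s((0 : ZMod N), ((m+1 : ℕ) : ZMod N))} := by
      constructor
      · intro p hp
        rw [Finset.mem_singleton] at hp
        subst hp
        have := short_diag 0
        rwa [zero_add] at this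
      · intro p hp q hq
        rw [Finset.mem_singleton] at hp hq
        subst hp; subst hq
        exact not_crosses_self _
    have := hmax _ hface (by rw [hemp]; exact Finset.empty_subset _)
    rw [hemp] at this
    exact absurd this.symm (Finset.singleton_ne_empty _)
  -- the set of lengths of diagonals in F
  set T : Set ℕ := {k | ∃ a b : ZMod N, s(a, b) ∈ F ∧ d2 a b = k} with hT
  have hTne : T.Nonempty := by
    obtain ⟨p, hp⟩ := hFne
    induction p using Sym2.inductionOn with
    | hf x y => exact ⟨d2 x y, x, y, hp, rfl⟩
  obtain ⟨a, b, hab, habd⟩ : ∃ a b : ZMod N, s(a, b) ∈ F ∧ d2 a b = sInf T := Nat.sInf_mem hTne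
  set d := sInf T with hd
  have hmin : ∀ c e : ZMod N, s(c, e) ∈ F → d ≤ d2 c e := by
    intro c e hce
    exact Nat.sInf_le ⟨c, e, hce, rfl⟩
  have hdiag := (hF.1 _ hab).1
  have hallow := (hF.1 _ hab).2
  rw [isDiagonal_iff hN] at hdiag
  rw [mallowable_iff] at hallow
  rw [habd] at hdiag hallow
  have hdm : m + 1 ≤ d := by
    obtain ⟨k, hk⟩ := hallow.1
    rcases Nat.eq_zero_or_pos k with rfl | hk0
    · omega
    · have : m ≤ m * k := Nat.le_mul_of_pos_right m hk0
      omega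
  -- no endpoint of any diagonal of F lies strictly inside the arc (a, b)
  have hinside : ∀ c e : ZMod N, s(c, e) ∈ F → ¬ ArcBtw a b c := by
    intro c e hce harc
    rw [arcBtw_iff, habd] at harc
    rcases Nat.lt_trichotomy (d2 a e) (d2 a c) with hlt | heq | hgt
    · -- e before c in the arc from a: diagonal (e,c) is shorter
      have : d2 e c = d2 a c - d2 a e := d2_sub_left (le_of_lt hlt)
      have hm1 := hmin e c (by rwa [Sym2.eq_swap] at hce)
      omega
    · exact absurd (d2_inj heq) (by
        intro hh
        subst hh
        have := (hF.1 _ hce).1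
        rw [isDiagonal_iff hN] at this
        have : d2 e e = 0 := d2_eq_zero_iff.mpr rfl
        omega)
    · rcases le_or_gt (d2 a e) d with hle | hgt2
      · -- e also in the closed arc: diagonal (c,e) is shorter
        have : d2 c e = d2 a e - d2 a c := d2_sub_left (le_of_lt hgt)
        have hm1 := hmin c e hce
        omega
      · -- e strictly beyond b: the diagonals cross
        rw [← habd] at hgt2
        have hbe : d2 b e = d2 a e - d2 a b := d2_sub_left (le_of_lt hgt2)
        have hba : d2 a b + d2 b a = N := d2_add_d2 (by rw [← d2_pos_iff]; omega)
        have heN := d2_lt a e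
        have hcross : Crosses s(a, b) s(c, e) := by
          rw [crosses_iff]
          left
          constructor
          · rw [arcBtw_iff, habd]; exact harc
          · rw [arcBtw_iff]; omega
        exact hF.2 _ hab _ hce hcross
  -- the minimal length is m + 1
  have hdval : d = m + 1 := by
    by_contra hne
    have hdm2 : m + 1 < d := by omega
    -- then s(a, a + (m+1)) can be added to F
    set e' : Sym2 (ZMod N) := s(a, a + ((m+1 : ℕ) : ZMod N)) with he'
    have he'notF : e' ∉ F := by
      intro hmem
      have := hmin _ _ hmem
      rw [d2, add_sub_cancel_left, val_natCast_lt hm2] at this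
      omega
    have hnocross : ∀ q ∈ F, ¬ Crosses e' q ∧ ¬ Crosses q e' := by
      intro q hq
      have hda : d2 a (a + ((m+1 : ℕ) : ZMod N)) = m + 1 := by
        rw [d2, add_sub_cancel_left, val_natCast_lt hm2]
      have hkey : ¬ Crosses e' q := by
        intro hcr
        induction q using Sym2.inductionOn with
        | hf z w =>
        rw [he', crosses_iff] at hcr
        rcases hcr with ⟨h1, _⟩ | ⟨h1, _⟩
        all_goals {
          rw [arcBtw_iff, hda] at h1
          first
          | exact hinside z w hq (by rw [arcBtw_iff, habd]; omega)
          | exact hinside w z (by rwa [Sym2.eq_swap] at hq) (by rw [arcBtw_iff, habd]; omega) }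
      exact ⟨hkey, fun hcr => hkey (crosses_comm hcr)⟩
    have hface : IsFace m (insert e' F) := by
      constructor
      · intro p hp
        rcases Finset.mem_insert.mp hp with rfl | hp
        · exact short_diag a
        · exact hF.1 p hp
      · intro p hp q hq
        rcases Finset.mem_insert.mp hp with rfl | hp <;>
          rcases Finset.mem_insert.mp hq with rfl | hq
        · exact not_crosses_self _
        · exact (hnocross q hq).1
        · exact (hnocross p hp).2
        · exact hF.2 p hp q hq
    have heq := hmax _ hface (Finset.subset_insert _ _)
    exact he'notF (by rw [heq]; exact Finset.mem_insert_self _ _)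
  -- conclude
  have hb : b = a + ((m+1 : ℕ) : ZMod N) := by
    have := cast_d2 a b
    rw [habd, hdval] at this
    linear_combination -this
  refine ⟨a, ?_, ?_⟩
  · rwa [← hb]
  · intro c e hce
    rw [← hb]
    intro harc
    exact hinside c e hce harc

/-- Base case: in the `(2m+2)`-gon every maximal face is a single diagonal. -/
lemma base_case {m : ℕ} (hm : 1 ≤ m) {N : ℕ} [NeZero N] (hNval : N = 2 * m + 2)
    (F : Finset (Sym2 (ZMod N))) (hF : IsFace m F)
    (hmax : ∀ G : Finset (Sym2 (ZMod N)), IsFace m G → F ⊆ G → F = G) :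
    F.card = 1 := by
  have hN : 2 < N := by omega
  have hm2 : m + 1 < N := by omega
  obtain ⟨a, hear, hins⟩ := ear_exists hm (by omega) (by
    rw [hNval, show 2*m+2 - m - 2 = m by omega]) F hF hmax
  set b : ZMod N := a + ((m+1 : ℕ) : ZMod N) with hb
  have hdab : d2 a b = m + 1 := by
    rw [hb, d2, add_sub_cancel_left, val_natCast_lt hm2]
  -- every diagonal in F has both sides of length m+1
  have hlen : ∀ c e : ZMod N, s(c, e) ∈ F → d2 c e = m + 1 ∧ d2 e c = m + 1 := by
    intro c e hce
    have h1 := (hF.1 _ hce).1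
    have h2 := (hF.1 _ hce).2
    rw [isDiagonal_iff hN] at h1
    rw [mallowable_iff] at h2
    have hne : c ≠ e := by rw [← d2_pos_iff]; omega
    have hsum := d2_add_d2 hne
    obtain ⟨k1, hk1⟩ := h2.1
    obtain ⟨k2, hk2⟩ := h2.2
    have e1 : d2 c e = m * k1 + 1 := by omega
    have e2 : d2 e c = m * k2 + 1 := by omega
    have : m * k1 + m * k2 = 2 * m := by omega
    have : k1 + k2 = 2 := by
      have hh : m * (k1 + k2) = m * 2 := by rw [Nat.mul_add]; omega
      exact Nat.eq_of_mul_eq_mul_left (by omega) hh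
    have hk1pos : 0 < k1 := Nat.pos_of_ne_zero (by rintro rfl; omega)
    have hk2pos : 0 < k2 := Nat.pos_of_ne_zero (by rintro rfl; omega)
    have : k1 = 1 ∧ k2 = 1 := by omega
    constructor <;> simp [e1, e2, this.1, this.2]
  -- every diagonal in F is the ear
  have hsub : ∀ q ∈ F, q = s(a, b) := by
    intro q hq
    induction q using Sym2.inductionOn with
    | hf c e =>
    obtain ⟨hce1, hce2⟩ := hlen c e hq
    have hq' : s(e, c) ∈ F := by rwa [Sym2.eq_swap]
    have hic := hins c e hq
    have hie := hins e c hq'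
    rw [arcBtw_iff, hdab] at hic hie
    have heca : e = c + ((m+1 : ℕ) : ZMod N) := by
      have := cast_d2 c e
      rw [hce1] at this
      linear_combination -this
    rcases eq_or_ne c a with rfl | hca
    · rw [heca, hb]
    rcases eq_or_ne c b with rfl | hcb
    · have : e = a := by
        rw [heca, hb]
        have : ((m+1:ℕ) : ZMod N) + ((m+1:ℕ) : ZMod N) = 0 := by
          have : ((N : ℕ) : ZMod N) = 0 := ZMod.natCast_self N
          rw [← this]
          push_cast
          rw [hNval]
          push_cast
          ring
        rw [add_assoc, this, add_zero]
      rw [this, Sym2.eq_swap]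
    -- now c is neither a nor b : derive a contradiction
    exfalso
    have hac : 0 < d2 a c := d2_pos_iff.mpr (Ne.symm hca)
    have hacb : d2 a c ≠ m + 1 := by
      intro hh
      exact hcb (d2_inj (hh.trans hdab.symm) : c = b)
    have hacN := d2_lt a c
    have hacge : m + 2 ≤ d2 a c := by omega
    rcases eq_or_ne e a with rfl | hea
    · -- then d2 e c = d2 a c = m+1, contradiction
      omega
    rcases eq_or_ne e b with rfl | heb
    · -- e = b : c = e + (m+1) = a, contradiction
      have : c = b + ((m+1:ℕ) : ZMod N) := by
        have := cast_d2 b c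
        rw [hce2] at this
        linear_combination -this
      apply hca
      rw [this, hb]
      have hNN : ((m+1:ℕ) : ZMod N) + ((m+1:ℕ) : ZMod N) = 0 := by
        have h0 : ((N : ℕ) : ZMod N) = 0 := ZMod.natCast_self N
        rw [← h0]; push_cast; rw [hNval]; push_cast; ring
      rw [add_assoc, hNN, add_zero]
    have hae : 0 < d2 a e := d2_pos_iff.mpr (Ne.symm hea)
    have haeb : d2 a e ≠ m + 1 := fun hh => heb (d2_inj (hh.trans hdab.symm) : e = b)
    have haeN := d2_lt a e
    have haege : m + 2 ≤ d2 a e := by omega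
    rcases le_or_gt (d2 a c) (d2 a e) with hle | hlt
    · have : d2 c e = d2 a e - d2 a c := d2_sub_left hle
      omega
    · have : d2 e c = d2 a c - d2 a e := d2_sub_left (le_of_lt hlt)
      omega
  have : F = {s(a, b)} := by
    apply Finset.eq_singleton_iff_unique_mem.mpr
    exact ⟨hear, hsub⟩
  rw [this, Finset.card_singleton]

/-! ### Contraction -/

def phi {N : ℕ} (m N' : ℕ) (x : ZMod N) : ZMod N' :=
  if x.val ≤ m then 0 else ((x.val - m : ℕ) : ZMod N')

def psi {N' : ℕ} (m N : ℕ) (y : ZMod N') : ZMod N :=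
  if y.val = 0 then 0 else ((y.val + m : ℕ) : ZMod N)

def inS {N : ℕ} (m : ℕ) (x : ZMod N) : Prop := x.val = 0 ∨ m + 1 ≤ x.val

section Contract

variable {m N N' : ℕ} [NeZero N] [NeZero N']

lemma val_inj {x y : ZMod N} (h : x.val = y.val) : x = y := by
  have hx : ((x.val : ℕ) : ZMod N) = x := (ZMod.natCast_val _).trans (ZMod.cast_id _ _)
  have hy : ((y.val : ℕ) : ZMod N) = y := (ZMod.natCast_val _).trans (ZMod.cast_id _ _)
  rw [← hx, ← hy, h]

lemma phi_val (hNN : N = N' + m) (x : ZMod N) :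
    (phi m N' x).val = if x.val ≤ m then 0 else x.val - m := by
  have hxN := ZMod.val_lt x
  rw [phi]
  split_ifs with h
  · exact ZMod.val_zero
  · exact ZMod.val_cast_of_lt (by omega)

lemma psi_val (hNN : N = N' + m) (y : ZMod N') :
    (psi m N y).val = if y.val = 0 then 0 else y.val + m := by
  have hyN := ZMod.val_lt y
  rw [psi]
  split_ifs with h
  · exact ZMod.val_zero
  · exact ZMod.val_cast_of_lt (by omega)

lemma psi_inS (hm : 1 ≤ m) (hNN : N = N' + m) (y : ZMod N') : inS m (psi m N y) := by
  rw [inS, psi_val hNN]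
  split_ifs with h
  · left; rfl
  · right; omega

lemma psi_phi (hm : 1 ≤ m) (hNN : N = N' + m) {x : ZMod N} (hx : inS m x) :
    psi m N (phi m N' x) = x := by
  apply val_inj
  have hxN := ZMod.val_lt x
  rw [psi_val hNN, phi_val hNN]
  rcases hx with h | h <;> split_ifs <;> omega

lemma phi_psi (hm : 1 ≤ m) (hNN : N = N' + m) (y : ZMod N') :
    phi m N' (psi m N y) = y := by
  apply val_inj
  rw [phi_val hNN, psi_val hNN]
  have := ZMod.val_lt y
  split_ifs with h1 h2 h2 <;> omega

/-- The master contraction lemma: the one-step description of how `phi`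
changes the cyclic distances. -/
lemma contract_d2_aux (hm : 1 ≤ m) (hN' : m + 2 ≤ N') (hNN : N = N' + m)
    {x y : ZMod N} (hx : inS m x) (hy : inS m y) (hxy : x ≠ y)
    (hred : x.val = 0 ∨ (0 < y.val ∧ y.val < x.val)) :
    d2 (phi m N' x) (phi m N' y) = d2 x y - m ∧ m + 1 ≤ d2 x y ∧
      d2 (phi m N' y) (phi m N' x) = d2 y x ∧
      (d2 x y = m + 1 → x = 0 ∧ y = ((m + 1 : ℕ) : ZMod N)) := by
  have hxN := ZMod.val_lt x
  have hyN := ZMod.val_lt y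
  have hvne : x.val ≠ y.val := fun h => hxy (val_inj h)
  have hyval : ((y.val : ℕ) : ZMod N) = y := (ZMod.natCast_val _).trans (ZMod.cast_id _ _)
  have hd1 : d2 x y = if x.val ≤ y.val then y.val - x.val else N - x.val + y.val := d2_val
  have hd2 : d2 y x = if y.val ≤ x.val then x.val - y.val else N - y.val + x.val := d2_val
  have hd1' : d2 (phi m N' x) (phi m N' y) =
      if (phi m N' x).val ≤ (phi m N' y).val then (phi m N' y).val - (phi m N' x).val
      else N' - (phi m N' x).val + (phi m N' y).val := d2_val
  have hd2' : d2 (phi m N' y) (phi m N' x) =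
      if (phi m N' y).val ≤ (phi m N' x).val then (phi m N' x).val - (phi m N' y).val
      else N' - (phi m N' y).val + (phi m N' x).val := d2_val
  rw [phi_val hNN, phi_val hNN] at hd1' hd2'
  rw [inS] at hx hy
  have hear : d2 x y = m + 1 → x = 0 ∧ y = ((m + 1 : ℕ) : ZMod N) := by
    intro hdxy
    have hx0 : x.val = 0 := by
      rcases hred with h | h
      · exact h
      · exfalso
        rw [hd1, if_neg (by omega)] at hdxy
        omega
    have hy0 : y.val = m + 1 := by
      rw [hd1, if_pos (by omega), hx0] at hdxy
      omega
    refine ⟨?_, ?_⟩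
    · apply val_inj; rw [hx0, ZMod.val_zero]
    · rw [← hyval, hy0]
  refine ⟨?_, ?_, ?_, hear⟩ <;>
  · simp only [hd1', hd2', hd1, hd2]
    split_ifs <;> omega

lemma contract_d2 (hm : 1 ≤ m) (hN' : m + 2 ≤ N') (hNN : N = N' + m)
    {x y : ZMod N} (hx : inS m x) (hy : inS m y) (hxy : x ≠ y) :
    (d2 (phi m N' x) (phi m N' y) = d2 x y - m ∧ m + 1 ≤ d2 x y ∧
      d2 (phi m N' y) (phi m N' x) = d2 y x ∧
      (d2 x y = m + 1 → x = 0 ∧ y = ((m + 1 : ℕ) : ZMod N))) ∨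
    (d2 (phi m N' y) (phi m N' x) = d2 y x - m ∧ m + 1 ≤ d2 y x ∧
      d2 (phi m N' x) (phi m N' y) = d2 x y ∧
      (d2 y x = m + 1 → y = 0 ∧ x = ((m + 1 : ℕ) : ZMod N))) := by
  have hvne : x.val ≠ y.val := fun h => hxy (val_inj h)
  rcases Nat.eq_zero_or_pos x.val with hx0 | hxpos
  · exact Or.inl (contract_d2_aux hm hN' hNN hx hy hxy (Or.inl hx0))
  rcases Nat.eq_zero_or_pos y.val with hy0 | hypos
  · exact Or.inr (contract_d2_aux hm hN' hNN hy hx (Ne.symm hxy) (Or.inl hy0))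
  rcases Nat.lt_or_ge x.val y.val with hlt | hge
  · exact Or.inr (contract_d2_aux hm hN' hNN hy hx (Ne.symm hxy) (Or.inr ⟨hxpos, hlt⟩))
  · exact Or.inl (contract_d2_aux hm hN' hNN hx hy hxy (Or.inr ⟨hypos, by omega⟩))

lemma arc_contract (hm : 1 ≤ m) (hN' : m + 2 ≤ N') (hNN : N = N' + m)
    {x y z : ZMod N} (hx : inS m x) (hy : inS m y) (hz : inS m z) :
    ArcBtw x y z ↔ ArcBtw (phi m N' x) (phi m N' y) (phi m N' z) := by
  have hxN := ZMod.val_lt x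
  have hyN := ZMod.val_lt y
  have hzN := ZMod.val_lt z
  rw [arcBtw_iff, arcBtw_iff]
  have e1 : d2 x z = if x.val ≤ z.val then z.val - x.val else N - x.val + z.val := d2_val
  have e2 : d2 x y = if x.val ≤ y.val then y.val - x.val else N - x.val + y.val := d2_val
  have e3 : d2 (phi m N' x) (phi m N' z) =
      if (phi m N' x).val ≤ (phi m N' z).val then (phi m N' z).val - (phi m N' x).val
      else N' - (phi m N' x).val + (phi m N' z).val := d2_val
  have e4 : d2 (phi m N' x) (phi m N' y) =
      if (phi m N' x).val ≤ (phi m N' y).val then (phi m N' y).val - (phi m N' x).val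
      else N' - (phi m N' x).val + (phi m N' y).val := d2_val
  simp only [phi_val hNN] at e3 e4
  rw [inS] at hx hy hz
  simp only [e1, e2, e3, e4]
  split_ifs <;> omega

end Contract

section Step

variable {m N N' : ℕ} [NeZero N] [NeZero N']

/-- The contraction step: collapsing an ear of a maximal face based at `0`
produces a maximal face in the `(N-m)`-gon with one fewer diagonal. -/
lemma contract_step (hm : 1 ≤ m) (hN' : m + 2 ≤ N') (hNN : N = N' + m)
    (F : Finset (Sym2 (ZMod N))) (hF : IsFace m F)
    (hmax : ∀ G : Finset (Sym2 (ZMod N)), IsFace m G → F ⊆ G → F = G)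
    (hear : s((0 : ZMod N), ((m + 1 : ℕ) : ZMod N)) ∈ F)
    (hins : ∀ c e : ZMod N, s(c, e) ∈ F → ¬ ArcBtw 0 ((m + 1 : ℕ) : ZMod N) c) :
    ∃ F' : Finset (Sym2 (ZMod N')), IsFace m F' ∧
      (∀ G : Finset (Sym2 (ZMod N')), IsFace m G → F' ⊆ G → F' = G) ∧
      F'.card + 1 = F.card := by
  have hN : 2 < N := by omega
  have hN2 : 2 < N' := by omega
  have hm2 : m + 1 < N := by omega
  set ear : Sym2 (ZMod N) := s((0 : ZMod N), ((m + 1 : ℕ) : ZMod N)) with hear_def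
  have hdear : d2 (0 : ZMod N) ((m + 1 : ℕ) : ZMod N) = m + 1 := by
    rw [d2_zero_left, val_natCast_lt hm2]
  -- endpoints of F lie in S
  have hendS : ∀ x y : ZMod N, s(x, y) ∈ F → inS m x ∧ inS m y := by
    have key : ∀ x y : ZMod N, s(x, y) ∈ F → inS m x := by
      intro x y hxy
      have := hins x y hxy
      rw [arcBtw_iff, d2_zero_left, hdear] at this
      rw [inS]
      omega
    intro x y hxy
    exact ⟨key x y hxy, key y x (by rwa [Sym2.eq_swap] at hxy)⟩
  -- basic facts about members of F
  have hfacts : ∀ x y : ZMod N, s(x, y) ∈ F →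
      x ≠ y ∧ 2 ≤ d2 x y ∧ 2 ≤ d2 y x ∧ m ∣ d2 x y - 1 ∧ m ∣ d2 y x - 1 := by
    intro x y hxy
    have h1 := (hF.1 _ hxy).1
    have h2 := (hF.1 _ hxy).2
    rw [isDiagonal_iff hN] at h1
    rw [mallowable_iff] at h2
    exact ⟨by rw [← d2_pos_iff]; omega, h1.1, h1.2, h2.1, h2.2⟩
  -- contraction facts for non-ear members
  have herase : ∀ x y : ZMod N, s(x, y) ∈ F → s(x, y) ≠ ear →
      2 ≤ d2 (phi m N' x) (phi m N' y) ∧ 2 ≤ d2 (phi m N' y) (phi m N' x) ∧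
      m ∣ d2 (phi m N' x) (phi m N' y) - 1 ∧ m ∣ d2 (phi m N' y) (phi m N' x) - 1 := by
    intro x y hxy hne
    obtain ⟨hxS, hyS⟩ := hendS x y hxy
    obtain ⟨hne', hd1, hd2, hv1, hv2⟩ := hfacts x y hxy
    have hdvd : ∀ d : ℕ, m + 2 ≤ d → m ∣ d - 1 → m ∣ d - m - 1 := by
      intro d hd hdv
      have : d - m - 1 = (d - 1) - m := by omega
      rw [this]
      exact Nat.dvd_sub hdv dvd_rfl
    rcases contract_d2 hm hN' hNN hxS hyS hne' with ⟨e1, e2, e3, e4⟩ | ⟨e1, e2, e3, e4⟩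
    · have hd12 : m + 2 ≤ d2 x y := by
        rcases Nat.lt_or_ge (d2 x y) (m + 2) with h | h
        · obtain ⟨rfl, rfl⟩ := e4 (by omega)
          exact absurd rfl hne
        · exact h
      refine ⟨by omega, by rw [e3]; omega, ?_, by rw [e3]; exact hv2⟩
      rw [e1]; exact hdvd _ hd12 hv1
    · have hd12 : m + 2 ≤ d2 y x := by
        rcases Nat.lt_or_ge (d2 y x) (m + 2) with h | h
        · obtain ⟨rfl, rfl⟩ := e4 (by omega)
          exact absurd (Sym2.eq_swap) hne
        · exact h
      refine ⟨by rw [e3]; omega, by omega, by rw [e3]; exact hv1, ?_⟩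
      rw [e1]; exact hdvd _ hd12 hv2
  -- crossing transfer
  have hcross : ∀ x y z w : ZMod N, inS m x → inS m y → inS m z → inS m w →
      (Crosses s(x, y) s(z, w) ↔
        Crosses s(phi m N' x, phi m N' y) s(phi m N' z, phi m N' w)) := by
    intro x y z w hx hy hz hw
    rw [crosses_iff, crosses_iff, arc_contract hm hN' hNN hx hy hz,
      arc_contract hm hN' hNN hy hx hw, arc_contract hm hN' hNN hx hy hw,
      arc_contract hm hN' hNN hy hx hz]
  set Φ : Sym2 (ZMod N) → Sym2 (ZMod N') := Sym2.map (phi m N') with hPhi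
  set Ψ : Sym2 (ZMod N') → Sym2 (ZMod N) := Sym2.map (psi m N) with hPsi
  have hPsiPhi : ∀ p ∈ F, Ψ (Φ p) = p := by
    intro p hp
    induction p using Sym2.inductionOn with
    | hf x y =>
    obtain ⟨hxS, hyS⟩ := hendS x y hp
    rw [hPhi, hPsi, Sym2.map_pair_eq, Sym2.map_pair_eq,
      psi_phi hm hNN hxS, psi_phi hm hNN hyS]
  have hPhiPsi : ∀ q : Sym2 (ZMod N'), Φ (Ψ q) = q := by
    intro q
    induction q using Sym2.inductionOn with
    | hf u v =>
    rw [hPsi, hPhi, Sym2.map_pair_eq, Sym2.map_pair_eq,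
      phi_psi hm hNN, phi_psi hm hNN]
  set F' : Finset (Sym2 (ZMod N')) := (F.erase ear).image Φ with hF'def
  have hmemF' : ∀ p ∈ F.erase ear, Φ p ∈ F' := fun p hp => Finset.mem_image_of_mem _ hp
  -- F' is a face
  have hface' : IsFace m F' := by
    constructor
    · intro p' hp'
      obtain ⟨p, hp, rfl⟩ := Finset.mem_image.mp hp'
      obtain ⟨hpne, hpF⟩ := Finset.mem_erase.mp hp
      induction p using Sym2.inductionOn with
      | hf x y =>
      obtain ⟨g1, g2, g3, g4⟩ := herase x y hpF hpne
      rw [hPhi, Sym2.map_pair_eq]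
      exact ⟨(isDiagonal_iff hN2).mpr ⟨g1, g2⟩, mallowable_iff.mpr ⟨g3, g4⟩⟩
    · intro p' hp' q' hq'
      obtain ⟨p, hp, rfl⟩ := Finset.mem_image.mp hp'
      obtain ⟨q, hq, rfl⟩ := Finset.mem_image.mp hq'
      obtain ⟨hpne, hpF⟩ := Finset.mem_erase.mp hp
      obtain ⟨hqne, hqF⟩ := Finset.mem_erase.mp hq
      induction p using Sym2.inductionOn with
      | hf x y =>
      induction q using Sym2.inductionOn with
      | hf z w =>
      obtain ⟨hxS, hyS⟩ := hendS x y hpF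
      obtain ⟨hzS, hwS⟩ := hendS z w hqF
      rw [hPhi, Sym2.map_pair_eq, Sym2.map_pair_eq, ← hcross x y z w hxS hyS hzS hwS]
      exact hF.2 _ hpF _ hqF
  -- cardinality
  have hcard : F'.card + 1 = F.card := by
    have hinj : Set.InjOn Φ (F.erase ear) := by
      intro p hp q hq hpq
      have := congrArg Ψ hpq
      rwa [hPsiPhi p (Finset.mem_erase.mp hp).2, hPsiPhi q (Finset.mem_erase.mp hq).2] at this
    rw [hF'def, Finset.card_image_of_injOn hinj, Finset.card_erase_of_mem hear]
    have : 0 < F.card := Finset.card_pos.mpr ⟨ear, hear⟩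
    omega
  -- maximality
  refine ⟨F', hface', ?_, hcard⟩
  intro G hG hsub
  apply Finset.Subset.antisymm hsub
  intro q' hq'
  -- lift q' to the big polygon
  have hq'facts := hG.1 q' hq'
  induction q' using Sym2.inductionOn with
  | hf u v =>
  rw [isDiagonal_iff hN2, mallowable_iff] at hq'facts
  obtain ⟨⟨k1, k2⟩, k3, k4⟩ := hq'facts
  set x := psi m N u with hx
  set y := psi m N v with hy
  have hxS : inS m x := psi_inS hm hNN u
  have hyS : inS m y := psi_inS hm hNN v
  have hphix : phi m N' x = u := phi_psi hm hNN u
  have hphiy : phi m N' y = v := phi_psi hm hNN v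
  have hxyne : x ≠ y := by
    intro h
    have : u = v := by rw [← hphix, ← hphiy, h]
    have : d2 u v = 0 := d2_eq_zero_iff.mpr this
    omega
  -- the lifted diagonal is allowable
  have hlift : 2 ≤ d2 x y ∧ 2 ≤ d2 y x ∧ m ∣ d2 x y - 1 ∧ m ∣ d2 y x - 1 := by
    have hdvd : ∀ d : ℕ, 1 ≤ d → m ∣ d - 1 → m ∣ d + m - 1 := by
      intro d hd hdv
      have : d + m - 1 = (d - 1) + m := by omega
      rw [this]
      exact Nat.dvd_add hdv dvd_rfl
    rcases contract_d2 hm hN' hNN hxS hyS hxyne with ⟨e1, e2, e3, _⟩ | ⟨e1, e2, e3, _⟩ <;>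
      rw [hphix, hphiy] at e1 e3
    · have hxy : d2 x y = d2 u v + m := by omega
      have hyx : d2 y x = d2 v u := e3.symm
      refine ⟨by omega, by omega, ?_, by rw [hyx]; exact k4⟩
      rw [hxy]; exact hdvd _ (by omega) k3
    · have hyx : d2 y x = d2 v u + m := by omega
      have hxy : d2 x y = d2 u v := e3.symm
      refine ⟨by omega, by omega, by rw [hxy]; exact k3, ?_⟩
      rw [hyx]; exact hdvd _ (by omega) k4
  -- the lifted diagonal does not cross the ear
  have hnocross_ear : ¬ Crosses ear s(x, y) := by
    rw [hear_def, crosses_iff]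
    rintro (⟨h1, _⟩ | ⟨h1, _⟩)
    · rw [arcBtw_iff, d2_zero_left, hdear] at h1
      rcases hxS with h | h <;> omega
    · rw [arcBtw_iff, d2_zero_left, hdear] at h1
      rcases hyS with h | h <;> omega
  -- the lifted diagonal does not cross anything in F
  have hnocross : ∀ p ∈ F, ¬ Crosses p s(x, y) ∧ ¬ Crosses s(x, y) p := by
    intro p hp
    rcases eq_or_ne p ear with rfl | hpne
    · exact ⟨hnocross_ear, fun h => hnocross_ear (crosses_comm h)⟩
    · induction p using Sym2.inductionOn with
      | hf z w =>
      obtain ⟨hzS, hwS⟩ := hendS z w hp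
      have hzw' : Φ s(z, w) ∈ G := hsub (hmemF' _ (Finset.mem_erase.mpr ⟨hpne, hp⟩))
      rw [hPhi, Sym2.map_pair_eq] at hzw'
      have h1 : ¬ Crosses s(z, w) s(x, y) := by
        rw [hcross z w x y hzS hwS hxS hyS, hphix, hphiy]
        exact hG.2 _ hzw' _ hq'
      exact ⟨h1, fun h => h1 (crosses_comm h)⟩
  -- conclude by maximality of F
  have hqF : s(x, y) ∈ F := by
    by_contra hqnF
    have hface2 : IsFace m (insert s(x, y) F) := by
      constructor
      · intro p hp
        rcases Finset.mem_insert.mp hp with rfl | hp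
        · exact ⟨(isDiagonal_iff hN).mpr ⟨hlift.1, hlift.2.1⟩,
            mallowable_iff.mpr ⟨hlift.2.2.1, hlift.2.2.2⟩⟩
        · exact hF.1 p hp
      · intro p hp q hq
        rcases Finset.mem_insert.mp hp with rfl | hp <;>
          rcases Finset.mem_insert.mp hq with rfl | hq
        · exact not_crosses_self _
        · exact (hnocross q hq).2
        · exact (hnocross p hp).1
        · exact hF.2 p hp q hq
    have := hmax _ hface2 (Finset.subset_insert _ _)
    exact hqnF (by rw [this]; exact Finset.mem_insert_self _ _)
  have hqne : s(x, y) ≠ ear := by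
    intro h
    have : Φ s(x, y) = Φ ear := by rw [h]
    rw [hPhi, Sym2.map_pair_eq, hphix, hphiy, hear_def, Sym2.map_pair_eq] at this
    -- Φ ear = s(0, 1) which is not a diagonal
    have hphi0 : (phi m N' (0 : ZMod N)).val = 0 := by
      rw [phi_val hNN, ZMod.val_zero, if_pos (by omega)]
    have hphim1 : (phi m N' ((m + 1 : ℕ) : ZMod N)).val = 1 := by
      rw [phi_val hNN, val_natCast_lt hm2, if_neg (by omega)]
      omega
    have hd2uv : d2 (phi m N' (0 : ZMod N)) (phi m N' ((m + 1 : ℕ) : ZMod N)) ≤ 1 := by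
      rw [d2_val, hphi0, hphim1]
      simp
    rcases Sym2.eq_iff.mp this with ⟨h1, h2⟩ | ⟨h1, h2⟩
    · rw [h1, h2] at k1; omega
    · rw [h1, h2] at k2; omega
  have hfin : Φ s(x, y) ∈ F' := hmemF' _ (Finset.mem_erase.mpr ⟨hqne, hqF⟩)
  rwa [hPhi, Sym2.map_pair_eq, hphix, hphiy] at hfin

end Step

lemma key_lemma : ∀ n : ℕ, 1 ≤ n → ∀ m : ℕ, 1 ≤ m → ∀ N : ℕ, ∀ _ : NeZero N,
    N = (n + 1) * m + 2 → ∀ F : Finset (Sym2 (ZMod N)), IsFace m F →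
    (∀ G : Finset (Sym2 (ZMod N)), IsFace m G → F ⊆ G → F = G) → F.card = n := by
  intro n
  induction n with
  | zero => omega
  | succ k ih =>
    intro _ m hm N hNZ hNval F hF hmax
    rcases Nat.eq_zero_or_pos k with rfl | hk
    · exact base_case hm (by omega) F hF hmax
    -- inductive step : k ≥ 1
    have hsize : 2 * m + 2 ≤ N := by nlinarith
    have hmN : m ∣ N - m - 2 := by
      have : N - m - 2 = (k + 1) * m := by
        have : N = (k + 1) * m + m + 2 := by rw [hNval]; ring
        omega
      rw [this]
      exact ⟨k + 1, by ring⟩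
    obtain ⟨a, hear, hins⟩ := ear_exists hm hsize hmN F hF hmax
    -- translate the ear to the origin
    set F₀ : Finset (Sym2 (ZMod N)) := F.image (tr (-a)) with hF₀
    have hear₀ : s((0 : ZMod N), ((m + 1 : ℕ) : ZMod N)) ∈ F₀ := by
      have : tr (-a) s(a, a + ((m + 1 : ℕ) : ZMod N)) =
          s((0 : ZMod N), ((m + 1 : ℕ) : ZMod N)) := by
        rw [tr, Sym2.map_pair_eq]
        congr 1 <;> ring
      rw [hF₀, ← this]
      exact Finset.mem_image_of_mem _ hear
    have hins₀ : ∀ c e : ZMod N, s(c, e) ∈ F₀ → ¬ ArcBtw 0 ((m + 1 : ℕ) : ZMod N) c := by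
      intro c e hce
      obtain ⟨p, hp, hpeq⟩ := Finset.mem_image.mp hce
      induction p using Sym2.inductionOn with
      | hf x y =>
      rw [tr, Sym2.map_pair_eq] at hpeq
      have harc : ∀ z : ZMod N, s(z, y + -a) ∈ F ∨ s(z, x + -a) ∈ F →
          True := fun _ _ => trivial
      rcases Sym2.eq_iff.mp hpeq with ⟨h1, h2⟩ | ⟨h1, h2⟩
      · intro hcontra
        apply hins x y hp
        have : ArcBtw (0 + a) (((m + 1 : ℕ) : ZMod N) + a) (c + a) :=
          arcBtw_shift.mpr hcontra
        rw [← h1] at this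
        have e0 : (0 : ZMod N) + a = a := by ring
        have e1 : x + -a + a = x := by ring
        have e2 : ((m + 1 : ℕ) : ZMod N) + a = a + ((m + 1 : ℕ) : ZMod N) := by ring
        rwa [e0, e2, e1] at this
      · intro hcontra
        apply hins y x (by rwa [Sym2.eq_swap] at hp)
        have : ArcBtw (0 + a) (((m + 1 : ℕ) : ZMod N) + a) (c + a) :=
          arcBtw_shift.mpr hcontra
        rw [← h2] at this
        have e0 : (0 : ZMod N) + a = a := by ring
        have e1 : y + -a + a = y := by ring
        have e2 : ((m + 1 : ℕ) : ZMod N) + a = a + ((m + 1 : ℕ) : ZMod N) := by ring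
        rwa [e0, e2, e1] at this
    have hface₀ : IsFace m F₀ := isFace_tr hF
    have hmax₀ : ∀ G : Finset (Sym2 (ZMod N)), IsFace m G → F₀ ⊆ G → F₀ = G :=
      max_tr hmax
    have hcard₀ : F₀.card = F.card := Finset.card_image_of_injective F (tr_inj (-a))
    -- contract
    set N' : ℕ := (k + 1) * m + 2 with hN'def
    haveI : NeZero N' := ⟨by positivity⟩
    have hN'size : m + 2 ≤ N' := by nlinarith
    have hNN : N = N' + m := by rw [hNval, hN'def]; ring
    obtain ⟨F', hface', hmax', hcard'⟩ :=
      contract_step hm hN'size hNN F₀ hface₀ hmax₀ hear₀ hins₀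
    have := ih hk m hm N' this hN'def F' hface' hmax'
    omega


/-- Every set of pairwise noncrossing `m`-allowable diagonals of the convex
`((n+1)m+2)`-gon that is maximal with respect to inclusion has exactly `n`
elements: the complex `Δ(m, n)` is pure of dimension `n - 1`. -/
theorem generalized_cluster_complex_A_pure (n m : ℕ) (hn : 1 ≤ n) (hm : 1 ≤ m)
    (F : Finset (Sym2 (ZMod ((n + 1) * m + 2)))) (hF : IsFace m F)
    (hmax : ∀ G : Finset (Sym2 (ZMod ((n + 1) * m + 2))), IsFace m G → F ⊆ G → F = G) :
    F.card = n := by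
  haveI : NeZero ((n + 1) * m + 2) := ⟨by positivity⟩
  exact key_lemma n hn m hm _ this rfl F hF hmax
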